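/- Let $d\ge 2$, $\tau_0,\ldots,\tau_d>0$, and let $e_0,\ldots,e_d$ be the standard orthonormal basis of $\mathbb{R}^{d+1}$. The simplex $S=[e_0/\tau_0,\ldots,e_d/\tau_d]$ is orthocentric, and its orthocenter is $w = (\tau_0 e_0 + \cdots + \tau_d e_d)/(\tau_0^2+\cdots+\tau_d^2)$, which lies in the relative interior of $S$. Moreover $w$ is the orthogonal projection of the origin onto the affine hull of $S$. -/

import Mathlib

open scoped RealInnerProductSpace

private lemma euclid_sum_apply {n : ℕ} {ι : Type*} (s : Finset ι)
    (f : ι → EuclideanSpace ℝ (Fin n)) (j : Fin n) :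
    (∑ i ∈ s, f i) j = ∑ i ∈ s, f i j :=
  by rw [WithLp.ofLp_sum]; exact Finset.sum_apply j s _

/-- For `τ₀,…,τ_d > 0` the simplex `S = [e₀/τ₀,…,e_d/τ_d] ⊆ ℝ^{d+1}` is orthocentric
with orthocenter `w = (∑ τᵢ eᵢ)/(∑ τᵢ²)`, which lies in the relative interior of `S`
and is the orthogonal projection of the origin onto the affine hull of `S`. -/
theorem acute_canonical_orthocentric (d : ℕ) (hd : 2 ≤ d)
    (τ : Fin (d + 1) → ℝ) (hτ : ∀ i, 0 < τ i) :
    let e : Fin (d + 1) → EuclideanSpace ℝ (Fin (d + 1)) :=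
      fun i => EuclideanSpace.single i 1
    let v : Fin (d + 1) → EuclideanSpace ℝ (Fin (d + 1)) :=
      fun i => (τ i)⁻¹ • e i
    let w : EuclideanSpace ℝ (Fin (d + 1)) :=
      (∑ i, (τ i) ^ 2)⁻¹ • ∑ i, τ i • e i
    (w ∈ affineSpan ℝ (Set.range v)) ∧
    (∀ i j k : Fin (d + 1), i ≠ j → j ≠ k → i ≠ k → ⟪v i - w, v j - v k⟫ = 0) ∧
    (w ∈ intrinsicInterior ℝ (convexHull ℝ (Set.range v))) ∧
    (∀ p ∈ affineSpan ℝ (Set.range v), ⟪p - w, w⟫ = 0) := by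
  intro e v w
  have hτ' : ∀ i, τ i ≠ 0 := fun i => (hτ i).ne'
  set T : ℝ := ∑ i, (τ i) ^ 2 with hTdef
  have hT : 0 < T := Finset.sum_pos (fun i _ => pow_pos (hτ i) 2) Finset.univ_nonempty
  have hT' : T ≠ 0 := hT.ne'
  -- coordinates
  have hv : ∀ i j, v i j = if j = i then (τ i)⁻¹ else 0 := by
    intro i j
    simp [v, e, EuclideanSpace.single_apply, mul_ite]
  have hw : ∀ j, w j = T⁻¹ * τ j := by
    intro j
    show T⁻¹ * (∑ i, τ i • e i) j = T⁻¹ * τ j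
    congr 1
    rw [euclid_sum_apply]
    simp [e, EuclideanSpace.single_apply, mul_ite]
  -- inner products
  have hinnervv : ∀ i j, i ≠ j → ⟪v i, v j⟫ = 0 := by
    intro i j hij
    simp [v, e, real_inner_smul_left, real_inner_smul_right,
      EuclideanSpace.inner_single_left, EuclideanSpace.single_apply, hij.symm]
  have hinnerwv : ∀ j, ⟪w, v j⟫ = T⁻¹ := by
    intro j
    have : ⟪w, v j⟫ = (τ j)⁻¹ * w j := by
      simp [v, e, real_inner_smul_right, EuclideanSpace.inner_single_right]
    rw [this, hw j]
    rw [mul_left_comm, inv_mul_cancel₀ (hτ' j), mul_one]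
  -- every point of the affine span satisfies ∑ τ i * x i = 1
  have hspan : ∀ x : EuclideanSpace ℝ (Fin (d + 1)),
      x ∈ affineSpan ℝ (Set.range v) → ∑ i, τ i * x i = 1 := by
    intro x hx
    refine affineSpan_induction (p := fun x => ∑ i, τ i * x i = 1) hx ?_ ?_
    · rintro x ⟨i, rfl⟩
      have : ∀ j, τ j * v i j = if j = i then 1 else 0 := by
        intro j
        rw [hv i j]
        by_cases h : j = i <;> simp [h, hτ' i]
      simp [this]
    · intro c u x y hu hx hy
      have : ∀ j, τ j * (c • (u -ᵥ x) +ᵥ y) j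
          = c * (τ j * u j) - c * (τ j * x j) + τ j * y j := by
        intro j
        show τ j * (c * (u j - x j) + y j) = _
        ring
      simp only [this, Finset.sum_add_distrib, Finset.sum_sub_distrib, ← Finset.mul_sum,
        hu, hx, hy]
      ring
  -- w as a positive combination of the v i
  have hcomb : ∀ x : EuclideanSpace ℝ (Fin (d + 1)),
      x = ∑ i, (τ i * x i) • v i := by
    intro x
    refine PiLp.ext fun j => ?_
    rw [euclid_sum_apply]
    have key : ∀ i, ((τ i * x i) • v i) j = if j = i then x i else 0 := by
      intro i
      show (τ i * x i) * v i j = _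
      rw [hv i j]
      by_cases h : j = i
      · subst h; field_simp
        rw [if_pos trivial, if_pos trivial, mul_comm, ← mul_assoc, one_div_mul_cancel (hτ' j), one_mul]
      · simp [h]
    rw [Finset.sum_congr rfl (fun i _ => key i)]
    simp
  have hwmem : w ∈ affineSpan ℝ (Set.range v) := by
    have hwsum : ∑ i, τ i * w i = 1 := by
      have : ∑ i, τ i * w i = T⁻¹ * T := by
        rw [hTdef, Finset.mul_sum]
        exact Finset.sum_congr rfl fun i _ => by rw [hw]; ring
      rw [this, inv_mul_cancel₀ hT']
    have := affineCombination_mem_affineSpan (k := ℝ) (s := Finset.univ)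
      (w := fun i => τ i * w i) hwsum v
    rwa [Finset.affineCombination_eq_linear_combination _ _ _ hwsum, ← hcomb w] at this
  refine ⟨hwmem, ?_, ?_, ?_⟩
  · -- orthocenter property
    intro i j k hij hjk hik
    rw [inner_sub_left, inner_sub_right, inner_sub_right,
      hinnervv i j hij, hinnervv i k hik, hinnerwv j, hinnerwv k]
    ring
  · -- relative interior
    rw [mem_intrinsicInterior]
    have hA : affineSpan ℝ (convexHull ℝ (Set.range v)) = affineSpan ℝ (Set.range v) :=
      affineSpan_convexHull _
    have hwA : w ∈ affineSpan ℝ (convexHull ℝ (Set.range v)) := hA ▸ hwmem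
    refine ⟨⟨w, hwA⟩, ?_, rfl⟩
    set A := affineSpan ℝ (convexHull ℝ (Set.range v))
    set U : Set A := {z : A | ∀ i, 0 < (z : EuclideanSpace ℝ (Fin (d + 1))) i} with hU
    have hUopen : IsOpen U := by
      have : U = ⋂ i, (fun z : A => (z : EuclideanSpace ℝ (Fin (d + 1))) i) ⁻¹' Set.Ioi 0 := by
        ext z; simp [hU]
      rw [this]
      exact isOpen_iInter_of_finite fun i =>
        (isOpen_Ioi.preimage (((EuclideanSpace.proj i).continuous).comp continuous_subtype_val))
    have hUsub : U ⊆ Subtype.val ⁻¹' (convexHull ℝ (Set.range v)) := by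
      intro z hz
      have hz1 : ∑ i, τ i * (z : EuclideanSpace ℝ (Fin (d + 1))) i = 1 :=
        hspan _ (hA ▸ z.2)
      have hrep := hcomb (z : EuclideanSpace ℝ (Fin (d + 1)))
      have hcm : Finset.univ.centerMass (fun i => τ i * (z : EuclideanSpace ℝ (Fin (d + 1))) i) v
          ∈ convexHull ℝ (Set.range v) := by
        refine Finset.centerMass_mem_convexHull _ (fun i _ => ?_) (by rw [hz1]; norm_num)
          (fun i _ => Set.mem_range_self i)
        exact (mul_pos (hτ i) (hz i)).le
      rw [Finset.centerMass, hz1] at hcm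
      simpa [← hrep] using hcm
    have hwU : (⟨w, hwA⟩ : A) ∈ U := by
      intro i
      show 0 < w i
      rw [hw i]
      exact mul_pos (inv_pos.mpr hT) (hτ i)
    exact interior_maximal hUsub hUopen hwU
  · -- orthogonal projection property
    intro p hp
    have key : ∀ q : EuclideanSpace ℝ (Fin (d + 1)),
        ⟪q, w⟫ = T⁻¹ * ∑ i, τ i * q i := by
      intro q
      rw [real_inner_comm]
      show ⟪(T⁻¹ : ℝ) • ∑ i, τ i • e i, q⟫ = _
      rw [real_inner_smul_left]
      congr 1
      rw [sum_inner]
      exact Finset.sum_congr rfl fun i _ => by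
        simp [e, real_inner_smul_left, EuclideanSpace.inner_single_left]
    have hwp : ⟪p, w⟫ = T⁻¹ := by rw [key p, hspan p hp, mul_one]
    have hww : ⟪w, w⟫ = T⁻¹ := by rw [key w, hspan w hwmem, mul_one]
    rw [inner_sub_left, hwp, hww, sub_self]
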